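/- For a triangular array (X_{nk})_{1≤k≤k_n, n∈ℕ} of square-integrable ℝ^d-valued random vectors adapted to σ-fields (F_{nk}), condition (M₂^d): E(max_{1≤k≤k_n} ‖X_{nk}‖²) → 0 implies the conditional Lindeberg condition (CLB^d): for every ε > 0, ∑_{k=1}^{k_n} E(‖X_{nk}‖² 1_{{‖X_{nk}‖ ≥ ε}} | F_{n,k-1}) → 0 in probability as n → ∞. -/

import Mathlib

open MeasureTheory Filter

lemma aux_markov {Ω : Type*} {m0 : MeasurableSpace Ω} (μ : Measure Ω) [IsProbabilityMeasure μ]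
    {d K : ℕ} (hK : 1 ≤ K)
    (𝓕 : ℕ → MeasurableSpace Ω) (hmono : Monotone 𝓕) (hle : ∀ k, 𝓕 k ≤ m0)
    (X : ℕ → Ω → EuclideanSpace ℝ (Fin d)) (hadp : ∀ k, StronglyMeasurable[𝓕 k] (X k))
    (hL2 : ∀ k, MemLp (X k) 2 μ) {ε δ : ℝ} (hε : 0 < ε) (hδ : 0 < δ) :
    μ {ω | δ ≤ |∑ k ∈ Finset.Icc 1 K,
        (μ[Set.indicator {ω'' | ε ≤ ‖X k ω''‖} (fun ω'' => ‖X k ω''‖ ^ 2) | 𝓕 (k - 1)]) ω|}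
      ≤ ENNReal.ofReal ((∫ ω, (Finset.Icc 1 K).sup' (Finset.nonempty_Icc.mpr hK)
          (fun k => ‖X k ω‖ ^ 2) ∂μ) / δ)
        + ENNReal.ofReal ((∫ ω, (Finset.Icc 1 K).sup' (Finset.nonempty_Icc.mpr hK)
          (fun k => ‖X k ω‖ ^ 2) ∂μ) / ε ^ 2) := by
  classical
  set ne1 : (Finset.Icc 1 K).Nonempty := Finset.nonempty_Icc.mpr hK
  set Mx : Ω → ℝ := fun ω => (Finset.Icc 1 K).sup' ne1 (fun k => ‖X k ω‖ ^ 2) with hMx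
  set Y : ℕ → Ω → ℝ :=
    fun k => Set.indicator {ω'' | ε ≤ ‖X k ω''‖} (fun ω'' => ‖X k ω''‖ ^ 2) with hY
  set CE : ℕ → Ω → ℝ := fun k => μ[Y k | 𝓕 (k - 1)] with hCE
  set S : ℕ → Ω → ℝ := fun j ω => ∑ i ∈ Finset.Icc 1 j, CE i ω with hS
  -- basic measurability
  have hXm : ∀ k, Measurable (X k) := fun k => ((hadp k).mono (hle k)).measurable
  have hXm' : ∀ k, Measurable fun ω => ‖X k ω‖ ^ 2 := fun k => (hXm k).norm.pow_const 2
  have hSet : ∀ k, MeasurableSet {ω'' | ε ≤ ‖X k ω''‖} :=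
    fun k => measurableSet_le measurable_const (hXm k).norm
  have hX2int : ∀ k, Integrable (fun ω => ‖X k ω‖ ^ 2) μ := by
    intro k
    have h := (hL2 k).integrable_norm_rpow two_ne_zero ENNReal.ofNat_ne_top
    simpa [ENNReal.toReal_ofNat, Real.rpow_natCast] using h
  have hYint : ∀ k, Integrable (Y k) μ := fun k => (hX2int k).indicator (hSet k)
  have hYnn : ∀ k ω, 0 ≤ Y k ω :=
    fun k => Set.indicator_nonneg (fun a _ => sq_nonneg _)
  have hYle : ∀ k ω, Y k ω ≤ ‖X k ω‖ ^ 2 :=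
    fun k => Set.indicator_le_self' (fun a _ => sq_nonneg _)
  have hCEnn : ∀ k, 0 ≤ᵐ[μ] CE k := fun k => condExp_nonneg (Filter.Eventually.of_forall (hYnn k))
  have hCEint : ∀ k, Integrable (CE k) μ := fun k => integrable_condExp
  have hCEsm : ∀ k, StronglyMeasurable[𝓕 (k - 1)] (CE k) := fun k => stronglyMeasurable_condExp
  have hCEm0 : ∀ k, Measurable (CE k) := fun k => ((hCEsm k).mono (hle _)).measurable
  have hSm0 : ∀ j, Measurable (S j) := fun j => Finset.measurable_sum _ (fun i _ => hCEm0 i)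
  -- Mx facts
  have hMxm : Measurable Mx := by
    have h1 := Finset.measurable_sup' (α := ℝ) ne1 (fun k _ => hXm' k)
    have h2 : Mx = (Finset.Icc 1 K).sup' ne1 (fun k ω => ‖X k ω‖ ^ 2) := by
      funext ω; rw [Finset.sup'_apply]
    rwa [h2]
  have hMxnn : ∀ ω, 0 ≤ Mx ω := fun ω =>
    le_trans (sq_nonneg ‖X 1 ω‖)
      (Finset.le_sup' (fun k => ‖X k ω‖ ^ 2) (Finset.mem_Icc.mpr ⟨le_refl 1, hK⟩))
  have hMxint : Integrable Mx μ := by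
    refine Integrable.mono' (integrable_finset_sum (Finset.Icc 1 K) (fun k _ => hX2int k))
      hMxm.aestronglyMeasurable (Filter.Eventually.of_forall fun ω => ?_)
    rw [Real.norm_of_nonneg (hMxnn ω)]
    exact Finset.sup'_le ne1 _ fun k hk =>
      Finset.single_le_sum (f := fun i => ‖X i ω‖ ^ 2) (fun i _ => sq_nonneg _) hk
  have hMxInn : 0 ≤ ∫ ω, Mx ω ∂μ := integral_nonneg hMxnn
  -- the sets
  set E : Set Ω := {ω | δ ≤ |S K ω|} with hE
  set G : Set Ω := {ω | ε ^ 2 ≤ Mx ω} with hG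
  have hEmeas : MeasurableSet E := measurableSet_le measurable_const (hSm0 K).abs
  have hGmeas : MeasurableSet G := measurableSet_le measurable_const hMxm
  set B : ℕ → Set Ω :=
    fun k => {ω | S (k - 1) ω ≤ δ ∧ ∀ j ∈ Finset.Icc 1 (k - 1), ‖X j ω‖ < ε} with hB
  have hBmeas : ∀ k, MeasurableSet[𝓕 (k - 1)] (B k) := by
    intro k
    have h1 : MeasurableSet[𝓕 (k - 1)] {ω | S (k - 1) ω ≤ δ} := by
      have : Measurable[𝓕 (k - 1)] (S (k - 1)) := by
        refine Finset.measurable_sum _ (fun i hi => ?_)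
        have hi' := Finset.mem_Icc.mp hi
        have hle' : 𝓕 (i - 1) ≤ 𝓕 (k - 1) := hmono (by omega)
        exact ((hCEsm i).measurable).mono hle' le_rfl
      exact measurableSet_le this (@measurable_const ℝ Ω _ (𝓕 (k - 1)) δ)
    have h2 : MeasurableSet[𝓕 (k - 1)] (⋂ j ∈ Finset.Icc 1 (k - 1), {ω | ‖X j ω‖ < ε}) := by
      refine MeasurableSet.biInter (Set.to_countable _) (fun j hj => ?_)
      have hj' : j ≤ k - 1 := (Finset.mem_Icc.mp hj).2
      have : Measurable[𝓕 (k - 1)] (X j) :=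
        ((hadp j).measurable).mono (hmono hj') le_rfl
      have hopen : MeasurableSet {v : EuclideanSpace ℝ (Fin d) | ‖v‖ < ε} :=
        measurableSet_lt measurable_norm measurable_const
      exact this hopen
    have : B k = {ω | S (k - 1) ω ≤ δ} ∩ ⋂ j ∈ Finset.Icc 1 (k - 1), {ω | ‖X j ω‖ < ε} := by
      ext ω; simp [hB, Set.mem_iInter]
    rw [this]; exact h1.inter h2
  have hBmeas0 : ∀ k, MeasurableSet (B k) := fun k => hle (k - 1) _ (hBmeas k)
  -- Step B : sum of set integrals of Y over B k is at most ∫ Mx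
  have stepB : ∑ k ∈ Finset.Icc 1 K, ∫ ω, (B k).indicator (Y k) ω ∂μ ≤ ∫ ω, Mx ω ∂μ := by
    rw [← integral_finset_sum _ (fun k _ => (hYint k).indicator (hBmeas0 k))]
    refine integral_mono (integrable_finset_sum _ (fun k _ => (hYint k).indicator (hBmeas0 k)))
      hMxint ?_
    intro ω
    show ∑ j ∈ Finset.Icc 1 K, (B j).indicator (Y j) ω ≤ Mx ω
    by_cases hex : ∃ k ∈ Finset.Icc 1 K, (B k).indicator (Y k) ω ≠ 0
    · obtain ⟨k, hkmem, hkne⟩ := hex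
      have hsum : ∑ j ∈ Finset.Icc 1 K, (B j).indicator (Y j) ω = (B k).indicator (Y k) ω := by
        refine Finset.sum_eq_single_of_mem k hkmem (fun j hjmem hjk => ?_)
        by_contra hjne
        -- both j and k are "first exceedances"
        have hkB : ω ∈ B k := by
          by_contra h; exact hkne (Set.indicator_of_notMem h _)
        have hkY : Y k ω ≠ 0 := by
          intro h; exact hkne (by rw [Set.indicator_apply]; split <;> simp [h])
        have hjB : ω ∈ B j := by
          by_contra h; exact hjne (Set.indicator_of_notMem h _)
        have hjY : Y j ω ≠ 0 := by
          intro h; exact hjne (by rw [Set.indicator_apply]; split <;> simp [h])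
        have hkε : ε ≤ ‖X k ω‖ := by
          by_contra h
          exact hkY (Set.indicator_of_notMem (by simpa using h) _)
        have hjε : ε ≤ ‖X j ω‖ := by
          by_contra h
          exact hjY (Set.indicator_of_notMem (by simpa using h) _)
        have hk1 : 1 ≤ k := (Finset.mem_Icc.mp hkmem).1
        have hj1 : 1 ≤ j := (Finset.mem_Icc.mp hjmem).1
        rcases lt_or_gt_of_ne hjk with h | h
        · exact absurd hjε (not_le.mpr (hkB.2 j (Finset.mem_Icc.mpr ⟨hj1, by omega⟩)))
        · exact absurd hkε (not_le.mpr (hjB.2 k (Finset.mem_Icc.mpr ⟨hk1, by omega⟩)))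
      rw [hsum]
      calc (B k).indicator (Y k) ω ≤ Y k ω :=
              Set.indicator_le_self' (fun a _ => hYnn k a) ω
        _ ≤ ‖X k ω‖ ^ 2 := hYle k ω
        _ ≤ Mx ω := Finset.le_sup' (fun k => ‖X k ω‖ ^ 2) hkmem
    · push_neg at hex
      have : ∑ j ∈ Finset.Icc 1 K, (B j).indicator (Y j) ω = 0 :=
        Finset.sum_eq_zero (fun j hj => hex j hj)
      rw [this]; exact hMxnn ω
  -- Step A : replace Y by CE via the defining property of conditional expectation
  have stepA : ∑ k ∈ Finset.Icc 1 K, ∫ ω, (B k).indicator (CE k) ω ∂μ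
      = ∑ k ∈ Finset.Icc 1 K, ∫ ω, (B k).indicator (Y k) ω ∂μ := by
    refine Finset.sum_congr rfl (fun k _ => ?_)
    rw [integral_indicator (hBmeas0 k), integral_indicator (hBmeas0 k)]
    exact setIntegral_condExp (hle (k - 1)) (hYint k) (hBmeas k)
  -- pointwise (a.e.) lower bound on the sum of indicators of CE
  have stepC : (E ∩ Gᶜ).indicator (fun _ => δ)
      ≤ᵐ[μ] fun ω => ∑ k ∈ Finset.Icc 1 K, (B k).indicator (CE k) ω := by
    have hae : ∀ᵐ ω ∂μ, ∀ k, 0 ≤ CE k ω := by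
      rw [MeasureTheory.ae_all_iff]; exact hCEnn
    filter_upwards [hae] with ω hCEω
    have hsumnn : ∀ k, 0 ≤ (B k).indicator (CE k) ω :=
      fun k => Set.indicator_nonneg (fun a _ => hCEω k) ω
    by_cases hωE : ω ∈ E ∩ Gᶜ
    swap
    · rw [Set.indicator_of_notMem hωE]
      exact Finset.sum_nonneg (fun k _ => hsumnn k)
    rw [Set.indicator_of_mem hωE]
    obtain ⟨hωE1, hωG⟩ := hωE
    -- all norms are < ε
    have hnorm : ∀ j ∈ Finset.Icc 1 K, ‖X j ω‖ < ε := by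
      intro j hj
      have h1 : ‖X j ω‖ ^ 2 ≤ Mx ω := Finset.le_sup' (fun k => ‖X k ω‖ ^ 2) hj
      have h2 : Mx ω < ε ^ 2 := not_le.mp hωG
      exact lt_of_pow_lt_pow_left₀ 2 (le_of_lt hε) (lt_of_le_of_lt h1 h2)
    -- S is monotone at ω
    have hSmono : ∀ a b : ℕ, a ≤ b → S a ω ≤ S b ω := by
      intro a b hab
      exact Finset.sum_le_sum_of_subset_of_nonneg
        (Finset.Icc_subset_Icc_right hab) (fun i _ _ => hCEω i)
    have hSK : δ ≤ S K ω := by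
      have h0 : 0 ≤ S K ω := Finset.sum_nonneg (fun i _ => hCEω i)
      have h1 : δ ≤ |S K ω| := hωE1
      rwa [abs_of_nonneg h0] at h1
    -- the largest index where the partial sum is still ≤ δ
    set F : Finset ℕ := (Finset.range (K + 1)).filter (fun k => S k ω ≤ δ) with hF
    have h0F : 0 ∈ F := by
      simp [hF, hS, le_of_lt hδ]
    set m : ℕ := F.max' ⟨0, h0F⟩ with hm
    have hmF : m ∈ F := Finset.max'_mem _ _
    have hmK : m ≤ K := by
      have := Finset.mem_range.mp (Finset.mem_filter.mp hmF).1
      omega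
    have hSm : S m ω ≤ δ := (Finset.mem_filter.mp hmF).2
    -- identify the filtered set
    have hfilt : (Finset.Icc 1 K).filter (fun k => ω ∈ B k) = Finset.Icc 1 (min (m + 1) K) := by
      ext k
      simp only [Finset.mem_filter, Finset.mem_Icc, le_min_iff]
      constructor
      · rintro ⟨⟨hk1, hkK⟩, hkB⟩
        refine ⟨hk1, ?_, hkK⟩
        have : k - 1 ∈ F := by
          refine Finset.mem_filter.mpr ⟨Finset.mem_range.mpr (by omega), hkB.1⟩
        have := Finset.le_max' F _ this
        omega
      · rintro ⟨hk1, hkm, hkK⟩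
        refine ⟨⟨hk1, hkK⟩, ⟨?_, ?_⟩⟩
        · exact le_trans (hSmono (k - 1) m (by omega)) hSm
        · intro j hj
          have := Finset.mem_Icc.mp hj
          exact hnorm j (Finset.mem_Icc.mpr ⟨this.1, by omega⟩)
    have hsum : ∑ k ∈ Finset.Icc 1 K, (B k).indicator (CE k) ω = S (min (m + 1) K) ω := by
      rw [hS]
      simp only [Set.indicator_apply]
      rw [← Finset.sum_filter, hfilt]
    rw [hsum]
    rcases le_or_gt (m + 1) K with hcase | hcase
    · rw [min_eq_left hcase]
      have : m + 1 ∉ F := by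
        intro h
        have := Finset.le_max' F _ h
        omega
      have : ¬ S (m + 1) ω ≤ δ := by
        intro h
        exact this (Finset.mem_filter.mpr ⟨Finset.mem_range.mpr (by omega), h⟩)
      linarith [not_le.mp this]
    · rw [min_eq_right (by omega)]
      exact hSK
  -- integrate step C
  have hhint : Integrable (fun ω => ∑ k ∈ Finset.Icc 1 K, (B k).indicator (CE k) ω) μ :=
    integrable_finset_sum _ (fun k _ => (hCEint k).indicator (hBmeas0 k))
  have hEGmeas : MeasurableSet (E ∩ Gᶜ) := hEmeas.inter hGmeas.compl
  have hmain : δ * (μ (E ∩ Gᶜ)).toReal ≤ ∫ ω, Mx ω ∂μ := by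
    have h1 : ∫ ω, (E ∩ Gᶜ).indicator (fun _ => δ) ω ∂μ = (μ (E ∩ Gᶜ)).toReal • δ :=
      integral_indicator_const δ hEGmeas
    have h2 : ∫ ω, (E ∩ Gᶜ).indicator (fun _ => δ) ω ∂μ
        ≤ ∫ ω, ∑ k ∈ Finset.Icc 1 K, (B k).indicator (CE k) ω ∂μ :=
      integral_mono_ae ((integrable_const δ).indicator hEGmeas) hhint stepC
    have h3 : ∫ ω, ∑ k ∈ Finset.Icc 1 K, (B k).indicator (CE k) ω ∂μ ≤ ∫ ω, Mx ω ∂μ := by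
      rw [integral_finset_sum _ (fun k _ => (hCEint k).indicator (hBmeas0 k)), stepA]
      exact stepB
    calc δ * (μ (E ∩ Gᶜ)).toReal = (μ (E ∩ Gᶜ)).toReal • δ := by rw [smul_eq_mul, mul_comm]
      _ = ∫ ω, (E ∩ Gᶜ).indicator (fun _ => δ) ω ∂μ := h1.symm
      _ ≤ _ := le_trans h2 h3
  have hmarkov : ε ^ 2 * (μ G).toReal ≤ ∫ ω, Mx ω ∂μ := by
    have h1 : ∫ ω, G.indicator (fun _ => ε ^ 2) ω ∂μ = (μ G).toReal • (ε ^ 2) :=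
      integral_indicator_const (ε ^ 2) hGmeas
    have h2 : ∫ ω, G.indicator (fun _ => ε ^ 2) ω ∂μ ≤ ∫ ω, Mx ω ∂μ := by
      refine integral_mono ((integrable_const _).indicator hGmeas) hMxint (fun ω => ?_)
      rw [Set.indicator_apply]
      split
      · next h => exact h
      · exact hMxnn ω
    calc ε ^ 2 * (μ G).toReal = (μ G).toReal • (ε ^ 2) := by rw [smul_eq_mul, mul_comm]
      _ ≤ _ := h1 ▸ h2
  -- conclude
  have hEsub : E ⊆ (E ∩ Gᶜ) ∪ G := by
    intro ω hω
    by_cases h : ω ∈ G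
    · exact Or.inr h
    · exact Or.inl ⟨hω, h⟩
  have hfin1 : μ (E ∩ Gᶜ) ≠ ⊤ := measure_ne_top μ _
  have hfin2 : μ G ≠ ⊤ := measure_ne_top μ _
  have hb1 : μ (E ∩ Gᶜ) ≤ ENNReal.ofReal ((∫ ω, Mx ω ∂μ) / δ) := by
    rw [← ENNReal.ofReal_toReal hfin1]
    refine ENNReal.ofReal_le_ofReal ?_
    rw [le_div_iff₀ hδ, mul_comm]
    exact hmain
  have hb2 : μ G ≤ ENNReal.ofReal ((∫ ω, Mx ω ∂μ) / ε ^ 2) := by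
    rw [← ENNReal.ofReal_toReal hfin2]
    refine ENNReal.ofReal_le_ofReal ?_
    rw [le_div_iff₀ (by positivity), mul_comm]
    exact hmarkov
  calc μ E ≤ μ ((E ∩ Gᶜ) ∪ G) := measure_mono hEsub
    _ ≤ μ (E ∩ Gᶜ) + μ G := measure_union_le _ _
    _ ≤ _ := add_le_add hb1 hb2

/-- For a square-integrable adapted triangular array, the condition
(M₂^d): `E(max_{1≤k≤k_n} ‖X_{nk}‖²) → 0` implies the conditional Lindeberg condition
(CLB^d): for every `ε > 0`,
`∑_{k=1}^{k_n} E(‖X_{nk}‖² 1_{‖X_{nk}‖ ≥ ε} | F_{n,k-1}) → 0` in probability. -/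
theorem stmt2 {Ω : Type*} {m0 : MeasurableSpace Ω} (μ : Measure Ω) [IsProbabilityMeasure μ]
    {d : ℕ} (kn : ℕ → ℕ) (hkn : ∀ n, 1 ≤ kn n)
    (𝓕 : ℕ → ℕ → MeasurableSpace Ω)
    (hFmono : ∀ n, Monotone (𝓕 n)) (hFle : ∀ n k, 𝓕 n k ≤ m0)
    (X : ℕ → ℕ → Ω → EuclideanSpace ℝ (Fin d))
    (hadapted : ∀ n k, StronglyMeasurable[𝓕 n k] (X n k))
    (hL2 : ∀ n k, MemLp (X n k) 2 μ)
    (hM2 : Tendsto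
      (fun n => ∫ ω, (Finset.Icc 1 (kn n)).sup'
        (Finset.nonempty_Icc.mpr (hkn n)) (fun k => ‖X n k ω‖ ^ 2) ∂μ)
      atTop (nhds 0)) :
    ∀ ε > (0 : ℝ), TendstoInMeasure μ
      (fun n ω => ∑ k ∈ Finset.Icc 1 (kn n),
        (μ[Set.indicator {ω'' | ε ≤ ‖X n k ω''‖} (fun ω'' => ‖X n k ω''‖ ^ 2) | 𝓕 n (k - 1)]) ω)
      atTop (fun _ => 0) := by
  intro ε hε
  rw [tendstoInMeasure_iff_dist]
  intro δ hδ
  simp only [Real.dist_eq, sub_zero]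
  set I : ℕ → ℝ := fun n => ∫ ω, (Finset.Icc 1 (kn n)).sup'
      (Finset.nonempty_Icc.mpr (hkn n)) (fun k => ‖X n k ω‖ ^ 2) ∂μ with hI
  have hbound : ∀ n, μ {x | δ ≤ |∑ k ∈ Finset.Icc 1 (kn n),
        (μ[Set.indicator {ω'' | ε ≤ ‖X n k ω''‖} (fun ω'' => ‖X n k ω''‖ ^ 2) | 𝓕 n (k - 1)]) x|}
      ≤ ENNReal.ofReal (I n / δ) + ENNReal.ofReal (I n / ε ^ 2) := fun n =>
    aux_markov μ (hkn n) (𝓕 n) (hFmono n) (hFle n) (X n) (hadapted n) (hL2 n) hε hδ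
  have han : Tendsto (fun n => ENNReal.ofReal (I n / δ) + ENNReal.ofReal (I n / ε ^ 2))
      atTop (nhds 0) := by
    have h1 : Tendsto (fun n => I n / δ) atTop (nhds 0) := by
      simpa using hM2.div_const δ
    have h2 : Tendsto (fun n => I n / ε ^ 2) atTop (nhds 0) := by
      simpa using hM2.div_const (ε ^ 2)
    have h1' : Tendsto (fun n => ENNReal.ofReal (I n / δ)) atTop (nhds 0) := by
      simpa using ENNReal.tendsto_ofReal h1
    have h2' : Tendsto (fun n => ENNReal.ofReal (I n / ε ^ 2)) atTop (nhds 0) := by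
      simpa using ENNReal.tendsto_ofReal h2
    simpa using h1'.add h2'
  exact tendsto_of_tendsto_of_tendsto_of_le_of_le tendsto_const_nhds han
    (fun n => zero_le) hbound
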